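/- arXiv:1604.05717 — 2 statements merged into one kernel-verified Lean document; each statement's English description precedes it below -/
import Mathlib

section
/- Let H be a complex Hilbert space, let p ∈ B(H) be an orthogonal projection of rank 1, and let k be a natural number with 0 < k < dim H. Then there exist k+1 orthogonal projections P₁, ..., P_{k+1} in B(H), each of rank k and pairwise commuting (and each commuting with p), such that p = (1/k) · ∑_{j=2}^{k+1} P_j − ((k−1)/k) · P₁. -/
open scoped InnerProductSpace

variable {H : Type*} [NormedAddCommGroup H] [InnerProductSpace ℂ H] [CompleteSpace H]

/-- `P` is an orthogonal projection of rank `k` on `H`. -/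
def IsRankProj (k : ℕ) (P : H →L[ℂ] H) : Prop :=
  IsSelfAdjoint P ∧ P * P = P ∧ Module.rank ℂ (LinearMap.range (P : H →ₗ[ℂ] H)) = k

section aux
variable {ι : Type*} [Fintype ι] [DecidableEq ι] {f : ι → H}

noncomputable def rk1 (f : ι → H) (i : ι) : H →L[ℂ] H := (innerSL ℂ (f i)).smulRight (f i)

lemma rk1_apply (f : ι → H) (i : ι) (x : H) : rk1 f i x = ⟪f i, x⟫_ℂ • f i := rfl

lemma rk1_mul (hf : Orthonormal ℂ f) (i j : ι) :
    rk1 f i * rk1 f j = if i = j then rk1 f i else 0 := by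
  ext x
  have h := orthonormal_iff_ite.mp hf i j
  by_cases hij : i = j <;> simp [hij] at h <;>
    simp [rk1_apply, hij, ContinuousLinearMap.mul_apply, inner_smul_right, h, smul_smul, mul_comm, hf.1]

lemma rk1_sa (f : ι → H) (i : ι) : IsSelfAdjoint (rk1 f i) := by
  rw [ContinuousLinearMap.isSelfAdjoint_iff_isSymmetric]
  intro x y
  simp [rk1_apply, inner_smul_left, inner_smul_right, mul_comm]

lemma rk1_sum_range (hf : Orthonormal ℂ f) (s : Finset ι) :
    LinearMap.range ((∑ i ∈ s, rk1 f i : H →L[ℂ] H) : H →ₗ[ℂ] H) = Submodule.span ℂ (f '' s) := by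
  apply le_antisymm
  · rintro _ ⟨x, rfl⟩
    simp only [ContinuousLinearMap.coe_sum, LinearMap.coe_sum, Finset.sum_apply,
      ContinuousLinearMap.coe_coe, rk1_apply]
    exact Submodule.sum_mem _ fun i hi =>
      Submodule.smul_mem _ _ (Submodule.subset_span ⟨i, hi, rfl⟩)
  · rw [Submodule.span_le]
    rintro _ ⟨i, hi, rfl⟩
    refine ⟨f i, ?_⟩
    have h := orthonormal_iff_ite.mp hf
    have hi' : i ∈ s := hi
    simp only [ContinuousLinearMap.coe_sum, LinearMap.coe_sum, Finset.sum_apply,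
      ContinuousLinearMap.coe_coe, rk1_apply, h, ite_smul, one_smul, zero_smul]
    rw [Finset.sum_ite_eq' s i f]
    simp [hi']

lemma rk1_sum_rank (hf : Orthonormal ℂ f) (s : Finset ι) :
    Module.rank ℂ (LinearMap.range ((∑ i ∈ s, rk1 f i : H →L[ℂ] H) : H →ₗ[ℂ] H)) = s.card := by
  rw [rk1_sum_range hf s]
  have hli0 : LinearIndependent ℂ (fun x : (↑s : Set ι) => f x) :=
    hf.linearIndependent.comp ((↑) : (↑s : Set ι) → ι) Subtype.coe_injective
  have hli := LinearIndepOn.id_image (s := (↑s : Set ι)) (v := f) hli0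
  classical
  rw [rank_span_set hli, show f '' ↑s = ↑(s.image f) from (Finset.coe_image).symm]
  simp [Finset.card_image_of_injOn hf.linearIndependent.injective.injOn]

end aux

theorem rank_one_proj_combination_of_rank_k
    (k : ℕ) (hk : 0 < k) (hkdim : (k : Cardinal) < Module.rank ℂ H)
    (p : H →L[ℂ] H) (hp : IsRankProj 1 p) :
    ∃ P : Fin (k + 1) → (H →L[ℂ] H),
      (∀ j, IsRankProj k (P j)) ∧
      (∀ i j, Commute (P i) (P j)) ∧
      (∀ j, Commute p (P j)) ∧
      p = ((1 : ℂ) / k) • (∑ j ∈ Finset.univ.erase 0, P j)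
            - (((k : ℂ) - 1) / k) • P 0 := by
  classical
  obtain ⟨hsa, hidem, hrank⟩ := hp
  -- Step 1: find a unit vector `e` with `p = rank-one projection onto e`
  obtain ⟨v₀, hv₀, hv⟩ := rank_eq_one_iff.mp hrank
  set v : H := (v₀ : H) with hv_def
  have hv_mem : v ∈ LinearMap.range (p : H →ₗ[ℂ] H) := v₀.2
  have hvne : v ≠ 0 := fun h => hv₀ (Subtype.ext h)
  have hpv : p v = v := by
    obtain ⟨u, hu⟩ := hv_mem
    have : p (p u) = p u := by
      have := congrFun (congrArg (DFunLike.coe) hidem) u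
      simpa [ContinuousLinearMap.mul_apply] using this
    simpa [show p u = v from hu] using this
  set e : H := ((‖v‖ : ℂ))⁻¹ • v with he_def
  have hnorm : ‖e‖ = 1 := by
    have h0 : ‖v‖ ≠ 0 := norm_ne_zero_iff.mpr hvne
    simp [he_def, norm_smul, h0]
  have hpe : p e = e := by simp [he_def, map_smul, hpv]
  have hsym := ContinuousLinearMap.isSelfAdjoint_iff_isSymmetric.mp hsa
  have hee : ⟪e, e⟫_ℂ = 1 := by
    rw [inner_self_eq_norm_sq_to_K, hnorm]; norm_num
  have hpx : ∀ x, p x = ⟪e, x⟫_ℂ • e := by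
    intro x
    obtain ⟨c, hc⟩ := hv ⟨p x, ⟨x, rfl⟩⟩
    have hc' : c • v = p x := congrArg Subtype.val hc
    have hxe : p x = (c * ‖v‖) • e := by
      rw [← hc', he_def, smul_smul, mul_assoc,
        mul_inv_cancel₀ (by exact_mod_cast norm_ne_zero_iff.mpr hvne), mul_one]
    have h1 : ⟪e, p x⟫_ℂ = ⟪e, x⟫_ℂ := by
      have h := hsym e x
      simp only [ContinuousLinearMap.coe_coe] at h
      rw [hpe] at h
      exact h.symm
    calc p x = (c * ‖v‖) • e := hxe
      _ = ⟪e, p x⟫_ℂ • e := by rw [hxe, inner_smul_right, hee, mul_one]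
      _ = ⟪e, x⟫_ℂ • e := by rw [h1]
  -- Step 2: extend `e` to an orthonormal family of size `k + 1`
  have hse : Orthonormal ℂ ((↑) : ({e} : Set H) → H) := by
    constructor
    · rintro ⟨x, hx⟩
      rw [Set.mem_singleton_iff] at hx
      simp [hx, hnorm]
    · intro i j hij
      exact absurd (Subsingleton.elim i j) hij
  obtain ⟨w, b, hsw, hbcoe⟩ := hse.exists_hilbertBasis_extension
  have hew : e ∈ w := hsw rfl
  have hwlt : (k : Cardinal) < Cardinal.mk w := by
    by_contra hcon
    push_neg at hcon
    have hfin : w.Finite := Cardinal.lt_aleph0_iff_set_finite.mp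
      (hcon.trans_lt (Cardinal.nat_lt_aleph0 k))
    have hfd : FiniteDimensional ℂ (Submodule.span ℂ w) := FiniteDimensional.span_of_finite ℂ hfin
    have hclosed : IsClosed (Submodule.span ℂ w : Set H) :=
      Submodule.closed_of_finiteDimensional _
    have hdense := b.dense_span
    rw [hbcoe, Subtype.range_coe] at hdense
    have htop : Submodule.span ℂ w = ⊤ := by
      rw [← hdense]
      exact (IsClosed.submodule_topologicalClosure_eq hclosed).symm
    have hle : Module.rank ℂ H ≤ (k : Cardinal) := by
      have h1 : Module.rank ℂ H = Module.rank ℂ (Submodule.span ℂ w) := by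
        rw [htop, rank_top]
      exact h1 ▸ (rank_span_le (R := ℂ) w).trans hcon
    exact absurd hkdim (not_lt.mpr hle)
  have hcard1 : (k : Cardinal) ≤ Cardinal.mk (w \ {e} : Set H) := by
    by_contra hcon
    push_neg at hcon
    have h1 : Cardinal.mk (w \ {e} : Set H) + 1 ≤ (k : Cardinal) :=
      (Cardinal.add_one_le_succ _).trans (Order.succ_le_of_lt hcon)
    have h2 : Cardinal.mk (w \ {e} : Set H) + 1 = Cardinal.mk w := by
      rw [← Cardinal.mk_singleton e]
      exact Cardinal.mk_diff_add_mk (Set.singleton_subset_iff.mpr hew)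
    exact absurd hwlt (not_lt.mpr (h2 ▸ h1))
  have hemb : Nonempty (Fin k ↪ (w \ {e} : Set H)) := by
    rw [← Cardinal.lift_mk_le']
    simpa using hcard1
  obtain ⟨g⟩ := hemb
  have hbor : Orthonormal ℂ ((↑) : w → H) := hbcoe ▸ b.orthonormal
  set F : Fin (k + 1) → w :=
    fun i => Fin.cases ⟨e, hew⟩ (fun i' => ⟨(g i' : H), (g i').2.1⟩) i with hF
  have hge : ∀ i', (g i' : H) ≠ e := fun i' h => (g i').2.2 (Set.mem_singleton_iff.mpr h)
  have hFz : F 0 = ⟨e, hew⟩ := by simp [hF]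
  have hFs : ∀ i', F (Fin.succ i') = ⟨(g i' : H), (g i').2.1⟩ := fun i' => by simp [hF]
  have hFinj : Function.Injective F := by
    intro i j hij
    induction i using Fin.cases with
    | zero =>
      induction j using Fin.cases with
      | zero => rfl
      | succ j' =>
        rw [hFz, hFs] at hij
        have : e = (g j' : H) := congrArg Subtype.val hij
        exact absurd this.symm (hge j')
    | succ i' =>
      induction j using Fin.cases with
      | zero =>
        rw [hFz, hFs] at hij
        have : (g i' : H) = e := congrArg Subtype.val hij
        exact absurd this (hge i')
      | succ j' =>
        rw [hFs, hFs] at hij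
        have h1 : (g i' : H) = (g j' : H) := Subtype.mk_eq_mk.mp hij
        have h2 : g i' = g j' := Subtype.ext h1
        exact congrArg Fin.succ (g.injective h2)
  set f : Fin (k + 1) → H := fun i => (F i : H) with hf_def
  have hf : Orthonormal ℂ f := hbor.comp F hFinj
  have hf0 : f 0 = e := rfl
  have hp_eq : p = rk1 f 0 := by
    ext x
    rw [hpx x]
    simp [rk1_apply, hf0]
  -- Step 3: assemble the projections
  have hcomm : ∀ a b : Fin (k + 1), Commute (rk1 f a) (rk1 f b) := by
    intro a b
    rcases eq_or_ne a b with rfl | hab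
    · exact Commute.refl _
    · show _ = _
      rw [rk1_mul hf a b, rk1_mul hf b a, if_neg hab, if_neg hab.symm]
  refine ⟨fun j => ∑ i ∈ Finset.univ.erase j, rk1 f i, ?_, ?_, ?_, ?_⟩
  · intro j
    refine ⟨?_, ?_, ?_⟩
    · exact Finset.sum_induction _ _ (fun a b ha hb => ha.add hb)
        (IsSelfAdjoint.zero _) (fun i _ => rk1_sa f i)
    · rw [Finset.sum_mul_sum]
      refine Finset.sum_congr rfl fun i hi => ?_
      rw [Finset.sum_congr rfl fun l _ => rk1_mul hf i l]
      simp [Finset.sum_ite_eq, hi]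
    · rw [rk1_sum_rank hf]
      simp [Finset.card_erase_of_mem]
  · intro i j
    exact Commute.sum_left _ _ _ fun a _ => Commute.sum_right _ _ _ fun c _ => hcomm a c
  · intro j
    rw [hp_eq]
    exact Commute.sum_right _ _ _ fun c _ => hcomm 0 c
  · have hk0 : (k : ℂ) ≠ 0 := Nat.cast_ne_zero.mpr hk.ne'
    have hsum : ∀ j : Fin (k + 1), ∑ i ∈ Finset.univ.erase j, rk1 f i
        = (∑ i, rk1 f i) - rk1 f j := fun j => Finset.sum_erase_eq_sub (Finset.mem_univ j)
    rw [hp_eq]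
    simp only [hsum]
    rw [Finset.sum_sub_distrib, Finset.sum_const,
      Finset.card_erase_of_mem (Finset.mem_univ _), Finset.card_univ, Fintype.card_fin, hsum 0]
    set S : H →L[ℂ] H := ∑ i, rk1 f i with hS
    have hns : (k + 1 - 1 : ℕ) • S = (k : ℂ) • S := by
      rw [Nat.add_sub_cancel, ← Nat.cast_smul_eq_nsmul ℂ]
    rw [hns]
    match_scalars <;> field_simp <;> ring
end

section
/- Let H be a complex Hilbert space, k a natural number with 0 < k < dim H, and let φ : B(H) → B(H) be a positive unital linear map which maps the set of rank-k orthogonal projections in B(H) onto itself. Then every rank-1 orthogonal projection in B(H) lies in the image of φ; more precisely, for each rank-1 projection p there is a self-adjoint operator a (a real linear combination of k+1 rank-k projections) with φ(a) = p. -/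
variable {H : Type*} [NormedAddCommGroup H] [InnerProductSpace ℂ H] [CompleteSpace H]

section Aux

set_option linter.unusedSectionVars false

/-- The rank-one operator `x ↦ ⟪v, x⟫ • v`. -/
noncomputable def rkOne (v : H) : H →L[ℂ] H := (innerSL ℂ v).smulRight v

lemma rkOne_apply (v x : H) : rkOne v x = (inner ℂ v x : ℂ) • v := rfl

lemma rkOne_selfAdjoint (v : H) : IsSelfAdjoint (rkOne v) := by
  rw [ContinuousLinearMap.isSelfAdjoint_iff_isSymmetric]
  intro x y
  simp [rkOne_apply, inner_smul_left, inner_smul_right, mul_comm]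

/-- A rank-1 projection is a rank-one operator attached to a unit vector. -/
lemma rankOneProj_eq {p : H →L[ℂ] H} (hp : IsRankProj 1 p) :
    ∃ u : H, ‖u‖ = 1 ∧ p = rkOne u := by
  obtain ⟨hsa, hidem, hrk⟩ := hp
  obtain ⟨v₀, hv₀⟩ := rank_le_one_iff.mp hrk.le
  have hv₀ne : (v₀ : H) ≠ 0 := by
    intro h
    have hall : ∀ v : LinearMap.range ((p : H →L[ℂ] H) : H →ₗ[ℂ] H), v = 0 := by
      intro v
      obtain ⟨r, hr⟩ := hv₀ v
      rw [← hr]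
      ext
      simp [h]
    have hsub : Subsingleton (LinearMap.range ((p : H →L[ℂ] H) : H →ₗ[ℂ] H)) :=
      subsingleton_of_forall_eq 0 fun v => (hall v)
    have := rank_subsingleton' ℂ (LinearMap.range ((p : H →L[ℂ] H) : H →ₗ[ℂ] H))
    rw [hrk] at this
    simp at this
  set u : H := ((‖(v₀ : H)‖ : ℂ))⁻¹ • (v₀ : H) with hu
  have hun : ‖u‖ = 1 := by
    rw [hu, norm_smul]
    simp [inv_mul_cancel₀ (norm_ne_zero_iff.mpr hv₀ne)]
  have hfix : ∀ x : H, x ∈ LinearMap.range ((p : H →L[ℂ] H) : H →ₗ[ℂ] H) → p x = x := by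
    rintro _ ⟨y, rfl⟩
    have := congrArg (fun T : H →L[ℂ] H => T y) hidem
    simpa [ContinuousLinearMap.mul_apply] using this
  have humem : u ∈ LinearMap.range ((p : H →L[ℂ] H) : H →ₗ[ℂ] H) :=
    Submodule.smul_mem _ _ v₀.2
  refine ⟨u, hun, ?_⟩
  have hsym := (ContinuousLinearMap.isSelfAdjoint_iff_isSymmetric.mp hsa)
  have huu : (inner ℂ u u : ℂ) = 1 := by
    rw [inner_self_eq_norm_sq_to_K, hun]; norm_num
  ext x
  obtain ⟨r, hr⟩ := hv₀ ⟨p x, ⟨x, rfl⟩⟩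
  have hr' : p x = r • (v₀ : H) := congrArg Subtype.val hr.symm
  have hc : p x = (r * (‖(v₀ : H)‖ : ℂ)) • u := by
    rw [hr', hu, smul_smul]
    congr 1
    rw [mul_assoc, mul_inv_cancel₀ (by simpa using norm_ne_zero_iff.mpr hv₀ne), mul_one]
  set c : ℂ := r * (‖(v₀ : H)‖ : ℂ)
  have h1 : (inner ℂ u (p x) : ℂ) = c := by
    rw [hc, inner_smul_right, huu, mul_one]
  have h2 : (inner ℂ u (p x) : ℂ) = inner ℂ u x := by
    have h3 := hsym u x
    simp only [ContinuousLinearMap.coe_coe] at h3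
    rw [← h3, hfix u humem]
  rw [rkOne_apply, hc, h1.symm.trans h2]

/-- Any unit vector extends to an orthonormal family of size `k + 1` when `k < dim H`. -/
lemma exists_orthonormal_ext (k : ℕ) (hkdim : (k : Cardinal) < Module.rank ℂ H)
    {u : H} (hu : ‖u‖ = 1) :
    ∃ e : Fin (k + 1) → H, Orthonormal ℂ e ∧ e 0 = u := by
  have hune : u ≠ 0 := by intro h; rw [h] at hu; simp at hu
  set S : Submodule ℂ H := ℂ ∙ u with hS
  set W : Submodule ℂ H := Sᗮ with hW
  have hcompl : IsCompl S W := Submodule.isCompl_orthogonal_of_hasOrthogonalProjection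
  have hrankS : Module.rank ℂ S = 1 := by
    rw [← Module.finrank_eq_rank, finrank_span_singleton hune]
    norm_num
  have hsum : Module.rank ℂ S + Module.rank ℂ W = Module.rank ℂ H := by
    have := Submodule.rank_sup_add_rank_inf_eq S W
    rw [hcompl.sup_eq_top, hcompl.inf_eq_bot, rank_top, rank_bot, add_zero] at this
    exact this.symm
  have hrkW : (k : Cardinal) ≤ Module.rank ℂ W := by
    by_contra hlt
    push_neg at hlt
    obtain ⟨m, hm, hmeq⟩ := Cardinal.exists_nat_eq_of_le_nat hlt.le
    have hmk : m < k := by rwa [hmeq, Nat.cast_lt] at hlt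
    have : Module.rank ℂ H ≤ (k : Cardinal) := by
      rw [← hsum, hrankS, hmeq]
      have : ((1 + m : ℕ) : Cardinal) ≤ (k : Cardinal) := by
        rw [Nat.cast_le]; omega
      simpa using this
    exact absurd hkdim (this.not_gt)
  obtain ⟨f, hf⟩ := natCast_le_rank_iff.mp hrkW
  letI : WellFoundedLT (Fin k) := inferInstance
  have hon : Orthonormal ℂ (InnerProductSpace.gramSchmidtNormed ℂ f) :=
    InnerProductSpace.gramSchmidtNormed_orthonormal hf
  set g : Fin k → H := fun i => (W.subtypeₗᵢ) (InnerProductSpace.gramSchmidtNormed ℂ f i) with hg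
  have hgon : Orthonormal ℂ g := hon.comp_linearIsometry _
  have hgW : ∀ i, g i ∈ W := fun i => (InnerProductSpace.gramSchmidtNormed ℂ f i).2
  have hgu : ∀ i, (inner ℂ u (g i) : ℂ) = 0 := fun i =>
    (hgW i) u (Submodule.mem_span_singleton_self u)
  refine ⟨Fin.cons u g, ?_, rfl⟩
  rw [orthonormal_iff_ite]
  intro i j
  induction i using Fin.cases with
  | zero =>
    induction j using Fin.cases with
    | zero => simp [inner_self_eq_norm_sq_to_K, hu]
    | succ j' =>
      rw [if_neg (Ne.symm (Fin.succ_ne_zero j'))]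
      simpa using hgu j'
  | succ i' =>
    induction j using Fin.cases with
    | zero =>
      rw [if_neg (Fin.succ_ne_zero i')]
      simp only [Fin.cons_succ, Fin.cons_zero]
      rw [← inner_conj_symm, hgu i', map_zero]
    | succ j' =>
      have h5 := orthonormal_iff_ite.mp hgon i' j'
      simp only [Fin.cons_succ]
      rw [h5]
      simp [Fin.succ_inj]

/-- The sum of the rank-one operators attached to an orthonormal family over a finset `s`
is an orthogonal projection of rank `s.card`. -/
lemma sumProj {ι : Type*} [DecidableEq ι] (e : ι → H) (he : Orthonormal ℂ e)
    (s : Finset ι) : IsRankProj s.card (∑ i ∈ s, rkOne (e i)) := by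
  classical
  have hinner := orthonormal_iff_ite.mp he
  set T : H →L[ℂ] H := ∑ i ∈ s, rkOne (e i) with hT
  have hfix : ∀ i ∈ s, T (e i) = e i := by
    intro i hi
    rw [hT, ContinuousLinearMap.sum_apply]
    rw [Finset.sum_eq_single i]
    · simp [rkOne_apply, hinner, he.1 i]
    · intro l hl hne
      simp [rkOne_apply, hinner, hne]
    · intro h; exact absurd hi h
  refine ⟨?_, ?_, ?_⟩
  · show star T = T
    rw [hT, star_sum]
    exact Finset.sum_congr rfl fun i _ => rkOne_selfAdjoint (e i)
  · have key : ∀ i ∈ s, T * rkOne (e i) = rkOne (e i) := by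
      intro i hi
      ext x
      simp only [ContinuousLinearMap.mul_apply, rkOne_apply, map_smul, hfix i hi]
    nth_rewrite 2 [hT]
    rw [Finset.mul_sum]
    rw [Finset.sum_congr rfl key, ← hT]
  · have hrange : LinearMap.range ((T : H →L[ℂ] H) : H →ₗ[ℂ] H)
        = Submodule.span ℂ (e '' ↑s) := by
      apply le_antisymm
      · rintro _ ⟨x, rfl⟩
        simp only [ContinuousLinearMap.coe_coe, hT, ContinuousLinearMap.sum_apply]
        apply Submodule.sum_mem
        intro i hi
        rw [rkOne_apply]
        exact Submodule.smul_mem _ _ (Submodule.subset_span ⟨i, hi, rfl⟩)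
      · rw [Submodule.span_le]
        rintro _ ⟨i, hi, rfl⟩
        exact ⟨e i, hfix i hi⟩
    rw [hrange]
    have hli : LinearIndependent ℂ (fun i : ↥(s : Set ι) => e i) :=
      he.linearIndependent.comp _ Subtype.val_injective
    have hsp := rank_span hli
    rw [← Set.image_eq_range] at hsp
    rw [hsp]
    have hinj : Set.InjOn e ↑s := ?_
    · have himg : e '' ↑s = ↑(s.image e) := by simp
      rw [himg]
      simp [Finset.card_image_of_injOn hinj]
    intro a ha b hb hab
    by_contra hne
    have := hinner a b
    rw [if_neg hne, hab] at this
    rw [inner_self_eq_norm_sq_to_K] at this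
    have h1 : ‖e b‖ = 1 := he.1 b
    rw [h1] at this
    norm_num at this

end Aux

theorem rank_one_proj_mem_image
    (k : ℕ) (hk : 0 < k) (hkdim : (k : Cardinal) < Module.rank ℂ H)
    (φ : (H →L[ℂ] H) →ₗ[ℂ] (H →L[ℂ] H))
    (hpos : ∀ a : H →L[ℂ] H, a.IsPositive → (φ a).IsPositive)
    (hunital : φ 1 = 1)
    (honto : φ '' {P | IsRankProj k P} = {P | IsRankProj k P}) :
    ∀ p : H →L[ℂ] H, IsRankProj 1 p →
      ∃ (a : H →L[ℂ] H) (c : Fin (k + 1) → ℝ) (P : Fin (k + 1) → (H →L[ℂ] H)),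
        IsSelfAdjoint a ∧
        (∀ j, IsRankProj k (P j)) ∧
        a = ∑ j, ((c j : ℂ)) • P j ∧
        φ a = p := by
  classical
  intro p hp
  obtain ⟨u, hu, hpu⟩ := rankOneProj_eq hp
  obtain ⟨e, he, he0⟩ := exists_orthonormal_ext k hkdim hu
  -- the projections R j onto span of {e i : i ≠ j}
  set R : Fin (k + 1) → (H →L[ℂ] H) :=
    fun j => ∑ i ∈ Finset.univ.erase j, rkOne (e i) with hRdef
  have hR : ∀ j, IsRankProj k (R j) := by
    intro j
    have hcard : (Finset.univ.erase j).card = k := by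
      rw [Finset.card_erase_of_mem (Finset.mem_univ j)]
      simp
    have := sumProj e he (Finset.univ.erase j)
    rwa [hcard] at this
  -- choose preimages of R j among rank-k projections
  have hpre : ∀ j, ∃ Q, IsRankProj k Q ∧ φ Q = R j := by
    intro j
    have hmem : R j ∈ {P : H →L[ℂ] H | IsRankProj k P} := hR j
    rw [← honto] at hmem
    obtain ⟨Q, hQ, hQeq⟩ := hmem
    exact ⟨Q, hQ, hQeq⟩
  choose Q hQ hQeq using hpre
  -- the coefficients
  set c : Fin (k + 1) → ℝ := fun j => if j = 0 then 1 / k - 1 else 1 / k with hcdef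
  have hkC : (k : ℂ) ≠ 0 := by
    simp [Nat.cast_ne_zero]
    omega
  -- the key identity : ∑ j, c j • R j = rkOne u
  have hkey : ∑ j, ((c j : ℂ)) • R j = rkOne u := by
    have hsub : ∀ j : Fin (k + 1),
        R j = (∑ i, rkOne (e i)) - rkOne (e j) := by
      intro j
      rw [hRdef]
      exact Finset.sum_erase_eq_sub (Finset.mem_univ j)
    have hcs : ∑ j, ((c j : ℂ)) = 1 / k := by
      rw [Fin.sum_univ_succ]
      have h0 : c 0 = 1 / k - 1 := by simp [hcdef]
      have hs : ∀ i : Fin k, c i.succ = 1 / k := by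
        intro i; simp [hcdef, Fin.succ_ne_zero i]
      rw [h0]
      have : ∑ i : Fin k, ((c i.succ : ℂ)) = k * (1 / k) := by
        rw [Finset.sum_congr rfl fun i _ => by rw [hs i]]
        simp [Finset.sum_const]
      rw [this]
      push_cast
      field_simp
      ring
    calc ∑ j, ((c j : ℂ)) • R j
        = ∑ j, (((c j : ℂ)) • (∑ i, rkOne (e i)) - ((c j : ℂ)) • rkOne (e j)) := by
          refine Finset.sum_congr rfl fun j _ => ?_
          rw [hsub j, smul_sub]
      _ = (∑ j, ((c j : ℂ))) • (∑ i, rkOne (e i)) - ∑ j, ((c j : ℂ)) • rkOne (e j) := by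
          rw [Finset.sum_sub_distrib, ← Finset.sum_smul]
      _ = ∑ j, ((1 / k : ℂ) - (c j : ℂ)) • rkOne (e j) := by
          rw [hcs, Finset.smul_sum, ← Finset.sum_sub_distrib]
          refine Finset.sum_congr rfl fun j _ => ?_
          rw [sub_smul]
      _ = rkOne u := by
          rw [Finset.sum_eq_single 0]
          · have h0 : c 0 = 1 / k - 1 := by simp [hcdef]
            rw [h0, he0]
            push_cast
            ring_nf
            rw [one_smul]
          · intro j _ hj
            have hs : c j = 1 / k := by simp [hcdef, hj]
            rw [hs]
            push_cast
            simp
          · intro h; exact absurd (Finset.mem_univ 0) h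
  refine ⟨∑ j, ((c j : ℂ)) • Q j, c, Q, ?_, hQ, rfl, ?_⟩
  · show star (∑ j, ((c j : ℂ)) • Q j) = ∑ j, ((c j : ℂ)) • Q j
    rw [star_sum]
    refine Finset.sum_congr rfl fun j _ => ?_
    rw [star_smul, (hQ j).1.star_eq]
    congr 1
    simp [Complex.conj_ofReal]
  · rw [map_sum]
    have : ∀ j ∈ Finset.univ, φ (((c j : ℂ)) • Q j) = ((c j : ℂ)) • R j := by
      intro j _
      rw [map_smul, hQeq j]
    rw [Finset.sum_congr rfl this, hkey, hpu]
end
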